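/- Let q0 : {0,…,r}² → ℂ satisfy (i+1)·q0(i+1,j) + (j+1)·q0(i,j+1) = 0 and (2r − 2i − 2j − n)·q0(i,j) = 0 for all 0 ≤ i,j ≤ r (terms with an index out of range interpreted as 0). Then there exists a unique coefficient family (q_k)_{0≤k≤n} whose level-0 component is q0; moreover this family satisfies q_k(i,j) = q_k(j,i) for all k,i,j if and only if q0(i,j) = q0(j,i) for all i,j. -/

import Mathlib

open Finset

noncomputable section

/-- `famN r m = 2r - 4m`, the highest weight `n` of the target representation. -/
def famN (r m : ℕ) : ℤ := 2 * (r : ℤ) - 4 * (m : ℤ)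

/-- A *coefficient family* for parameters `r, m`: a function `q k i j` (complex valued,
indices integers) that vanishes whenever `(k,i,j)` is out of range
(`0 ≤ k ≤ n`, `0 ≤ i,j ≤ r`, where `n = 2r - 4m`) and satisfies the sl₂-compatibility
relations (R1), (R2), (R3) for all admissible indices. -/
def IsCoeffFamily (r m : ℕ) (q : ℤ → ℤ → ℤ → ℂ) : Prop :=
  (∀ k i j : ℤ,
      ¬(0 ≤ k ∧ k ≤ famN r m ∧ 0 ≤ i ∧ i ≤ (r : ℤ) ∧ 0 ≤ j ∧ j ≤ (r : ℤ)) →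
      q k i j = 0) ∧
  (∀ k i j : ℤ, 0 ≤ k → k ≤ famN r m → 0 ≤ i → i ≤ (r : ℤ) → 0 ≤ j → j ≤ (r : ℤ) →
      (k : ℂ) * q (k - 1) i j
        = ((i : ℂ) + 1) * q k (i + 1) j + ((j : ℂ) + 1) * q k i (j + 1)) ∧
  (∀ k i j : ℤ, 0 ≤ k → k ≤ famN r m → 0 ≤ i → i ≤ (r : ℤ) → 0 ≤ j → j ≤ (r : ℤ) →
      ((famN r m - k : ℤ) : ℂ) * q (k + 1) i j
        = (((r : ℤ) - i + 1 : ℤ) : ℂ) * q k (i - 1) j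
          + (((r : ℤ) - j + 1 : ℤ) : ℂ) * q k i (j - 1)) ∧
  (∀ k i j : ℤ, 0 ≤ k → k ≤ famN r m → 0 ≤ i → i ≤ (r : ℤ) → 0 ≤ j → j ≤ (r : ℤ) →
      ((famN r m - 2 * k - 2 * (r : ℤ) + 2 * i + 2 * j : ℤ) : ℂ) * q k i j = 0)

/-- Binomial coefficient `binom a b` for integers, interpreted as `0` when `b` is out of
the range `0 ≤ b ≤ a`, as a complex number. -/
def binomZ (a b : ℤ) : ℂ :=
  if 0 ≤ b ∧ b ≤ a then (Nat.choose a.toNat b.toNat : ℂ) else 0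

/-- The *canonical coefficient family* with parameter `λ`: the coefficient family whose
level-0 component is `q₀ i j = (-1)^i * binom (2m) i * λ` if `i + j = 2m` and `0`
otherwise. -/
def IsCanonical (r m : ℕ) (lam : ℂ) (q : ℤ → ℤ → ℤ → ℂ) : Prop :=
  IsCoeffFamily r m q ∧
  ∀ i j : ℤ, 0 ≤ i → i ≤ (r : ℤ) → 0 ≤ j → j ≤ (r : ℤ) →
    q 0 i j =
      if i + j = 2 * (m : ℤ) then (-1) ^ i.toNat * binomZ (2 * (m : ℤ)) i * lam else 0
def opX (f : ℤ → ℤ → ℂ) : ℤ → ℤ → ℂ :=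
  fun i j => ((i : ℂ) + 1) * f (i + 1) j + ((j : ℂ) + 1) * f i (j + 1)

def opY (r : ℕ) (f : ℤ → ℤ → ℂ) : ℤ → ℤ → ℂ :=
  fun i j => ((r : ℂ) - (i : ℂ) + 1) * f (i - 1) j + ((r : ℂ) - (j : ℂ) + 1) * f i (j - 1)

lemma comm_XY (r : ℕ) (f : ℤ → ℤ → ℂ) (i j : ℤ) :
    opX (opY r f) i j = opY r (opX f) i j + (2 * (r : ℂ) - 2 * (i : ℂ) - 2 * (j : ℂ)) * f i j := by
  simp only [opX, opY, add_sub_cancel_right, sub_add_cancel]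
  push_cast
  ring

def Qfam (r m : ℕ) (q0 : ℤ → ℤ → ℂ) : ℕ → ℤ → ℤ → ℂ
  | 0 => q0
  | (k+1) => fun i j => opY r (Qfam r m q0 k) i j / ((famN r m : ℂ) - (k : ℂ))

/-- If f is supported on the diagonal i+j=s inside the box, then opY f is supported on
i+j=s+1 inside the box. -/
lemma Ysupp (r : ℕ) (f : ℤ → ℤ → ℂ) (s : ℤ)
    (hf : ∀ i j : ℤ, ¬(0 ≤ i ∧ i ≤ (r:ℤ) ∧ 0 ≤ j ∧ j ≤ (r:ℤ) ∧ i + j = s) → f i j = 0)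
    (i j : ℤ) (h : ¬(0 ≤ i ∧ i ≤ (r:ℤ) ∧ 0 ≤ j ∧ j ≤ (r:ℤ) ∧ i + j = s + 1)) :
    opY r f i j = 0 := by
  have h1 : ((r : ℂ) - (i : ℂ) + 1) * f (i - 1) j = 0 := by
    by_cases hz : f (i - 1) j = 0
    · rw [hz, mul_zero]
    · have hc : 0 ≤ i - 1 ∧ i - 1 ≤ (r:ℤ) ∧ 0 ≤ j ∧ j ≤ (r:ℤ) ∧ (i - 1) + j = s := by
        by_contra hc; exact hz (hf _ _ hc)
      have hi : i = (r : ℤ) + 1 := by omega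
      have : (i : ℂ) = (r : ℂ) + 1 := by exact_mod_cast congrArg (Int.cast : ℤ → ℂ) hi
      rw [this]; ring
  have h2 : ((r : ℂ) - (j : ℂ) + 1) * f i (j - 1) = 0 := by
    by_cases hz : f i (j - 1) = 0
    · rw [hz, mul_zero]
    · have hc : 0 ≤ i ∧ i ≤ (r:ℤ) ∧ 0 ≤ j - 1 ∧ j - 1 ≤ (r:ℤ) ∧ i + (j - 1) = s := by
        by_contra hc; exact hz (hf _ _ hc)
      have hj : j = (r : ℤ) + 1 := by omega
      have : (j : ℂ) = (r : ℂ) + 1 := by exact_mod_cast congrArg (Int.cast : ℤ → ℂ) hj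
      rw [this]; ring
  simp only [opY, h1, h2, add_zero]

lemma supp (r m : ℕ) (q0 : ℤ → ℤ → ℂ)
    (hq0range : ∀ i j : ℤ, ¬(0 ≤ i ∧ i ≤ (r : ℤ) ∧ 0 ≤ j ∧ j ≤ (r : ℤ)) → q0 i j = 0)
    (hq0wt : ∀ i j : ℤ, 0 ≤ i → i ≤ (r : ℤ) → 0 ≤ j → j ≤ (r : ℤ) →
      ((2 * (r : ℤ) - 2 * i - 2 * j - famN r m : ℤ) : ℂ) * q0 i j = 0) :
    ∀ k : ℕ, ∀ i j : ℤ,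
      ¬(0 ≤ i ∧ i ≤ (r:ℤ) ∧ 0 ≤ j ∧ j ≤ (r:ℤ) ∧ i + j = (k:ℤ) + 2 * m) →
      Qfam r m q0 k i j = 0 := by
  intro k
  induction k with
  | zero =>
    intro i j h
    by_cases hin : 0 ≤ i ∧ i ≤ (r:ℤ) ∧ 0 ≤ j ∧ j ≤ (r:ℤ)
    · obtain ⟨h1, h2, h3, h4⟩ := hin
      have hw := hq0wt i j h1 h2 h3 h4
      have hne : (2 * (r : ℤ) - 2 * i - 2 * j - famN r m) ≠ 0 := by
        simp only [famN]; omega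
      have : ((2 * (r : ℤ) - 2 * i - 2 * j - famN r m : ℤ) : ℂ) ≠ 0 :=
        Int.cast_ne_zero.mpr hne
      exact (mul_eq_zero.mp hw).resolve_left this
    · exact hq0range i j hin
  | succ t ih =>
    intro i j h
    show opY r (Qfam r m q0 t) i j / ((famN r m : ℂ) - (t : ℂ)) = 0
    rw [Ysupp r (Qfam r m q0 t) ((t:ℤ) + 2 * m) ih i j (by push_cast at h ⊢; omega)]
    simp

lemma wt (r m : ℕ) (q0 : ℤ → ℤ → ℂ)
    (hq0range : ∀ i j : ℤ, ¬(0 ≤ i ∧ i ≤ (r : ℤ) ∧ 0 ≤ j ∧ j ≤ (r : ℤ)) → q0 i j = 0)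
    (hq0wt : ∀ i j : ℤ, 0 ≤ i → i ≤ (r : ℤ) → 0 ≤ j → j ≤ (r : ℤ) →
      ((2 * (r : ℤ) - 2 * i - 2 * j - famN r m : ℤ) : ℂ) * q0 i j = 0)
    (k : ℕ) (i j : ℤ) :
    (2 * (r : ℂ) - 2 * (i : ℂ) - 2 * (j : ℂ)) * Qfam r m q0 k i j
      = (((famN r m : ℤ) : ℂ) - 2 * (k : ℂ)) * Qfam r m q0 k i j := by
  by_cases hz : Qfam r m q0 k i j = 0
  · rw [hz, mul_zero, mul_zero]
  · have hc : 0 ≤ i ∧ i ≤ (r:ℤ) ∧ 0 ≤ j ∧ j ≤ (r:ℤ) ∧ i + j = (k:ℤ) + 2 * m := by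
      by_contra hc; exact hz (supp r m q0 hq0range hq0wt k i j hc)
    have hij : i + j = (k:ℤ) + 2 * m := hc.2.2.2.2
    have hijC : (i : ℂ) + (j : ℂ) = (k : ℂ) + 2 * (m : ℂ) := by exact_mod_cast hij
    have hn : ((famN r m : ℤ) : ℂ) = 2 * (r : ℂ) - 4 * (m : ℂ) := by
      simp only [famN]; push_cast; ring
    rw [hn]
    have : (2 * (r : ℂ) - 2 * (i : ℂ) - 2 * (j : ℂ))
        = (2 * (r : ℂ) - 4 * (m : ℂ) - 2 * (k : ℂ)) := by linear_combination -2 * hijC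
    rw [this]

lemma nkne (r m : ℕ) (k : ℕ) (hk : (k : ℤ) < famN r m) :
    ((famN r m : ℤ) : ℂ) - (k : ℂ) ≠ 0 := by
  have : ((famN r m - (k:ℤ) : ℤ) : ℂ) ≠ 0 := Int.cast_ne_zero.mpr (by omega)
  push_cast at this
  convert this using 1

lemma Ydef (r m : ℕ) (q0 : ℤ → ℤ → ℂ) (k : ℕ) (hk : (k : ℤ) < famN r m) (i j : ℤ) :
    (((famN r m : ℤ) : ℂ) - (k : ℂ)) * Qfam r m q0 (k+1) i j
      = opY r (Qfam r m q0 k) i j := by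
  show (((famN r m : ℤ) : ℂ) - (k : ℂ)) * (opY r (Qfam r m q0 k) i j / _) = _
  rw [mul_div_cancel₀]
  exact nkne r m k hk

lemma XQ0 (r : ℕ) (q0 : ℤ → ℤ → ℂ)
    (hq0range : ∀ i j : ℤ, ¬(0 ≤ i ∧ i ≤ (r : ℤ) ∧ 0 ≤ j ∧ j ≤ (r : ℤ)) → q0 i j = 0)
    (hq0rec : ∀ i j : ℤ, 0 ≤ i → i ≤ (r : ℤ) → 0 ≤ j → j ≤ (r : ℤ) →
      ((i : ℂ) + 1) * q0 (i + 1) j + ((j : ℂ) + 1) * q0 i (j + 1) = 0)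
    (i j : ℤ) : opX q0 i j = 0 := by
  by_cases hin : 0 ≤ i ∧ i ≤ (r:ℤ) ∧ 0 ≤ j ∧ j ≤ (r:ℤ)
  · exact hq0rec i j hin.1 hin.2.1 hin.2.2.1 hin.2.2.2
  · have h1 : ((i : ℂ) + 1) * q0 (i + 1) j = 0 := by
      by_cases hz : q0 (i + 1) j = 0
      · rw [hz, mul_zero]
      · have hc : 0 ≤ i + 1 ∧ i + 1 ≤ (r:ℤ) ∧ 0 ≤ j ∧ j ≤ (r:ℤ) := by
          by_contra hc; exact hz (hq0range _ _ hc)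
        have hi : i = -1 := by omega
        have : (i : ℂ) = -1 := by exact_mod_cast congrArg (Int.cast : ℤ → ℂ) hi
        rw [this]; ring
    have h2 : ((j : ℂ) + 1) * q0 i (j + 1) = 0 := by
      by_cases hz : q0 i (j + 1) = 0
      · rw [hz, mul_zero]
      · have hc : 0 ≤ i ∧ i ≤ (r:ℤ) ∧ 0 ≤ j + 1 ∧ j + 1 ≤ (r:ℤ) := by
          by_contra hc; exact hz (hq0range _ _ hc)
        have hj : j = -1 := by omega
        have : (j : ℂ) = -1 := by exact_mod_cast congrArg (Int.cast : ℤ → ℂ) hj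
        rw [this]; ring
    simp only [opX, h1, h2, add_zero]

lemma YXQ (r m : ℕ) (q0 : ℤ → ℤ → ℂ) (k : ℕ) (hk : (k:ℤ) ≤ famN r m)
    (hX : ∀ x y : ℤ, opX (Qfam r m q0 k) x y = (k:ℂ) * Qfam r m q0 (k-1) x y)
    (i j : ℤ) :
    opY r (opX (Qfam r m q0 k)) i j
      = (k:ℂ) * ((((famN r m : ℤ) : ℂ) - (k:ℂ) + 1) * Qfam r m q0 k i j) := by
  cases k with
  | zero => simp [opY, hX]
  | succ t =>
    have ht : (t:ℤ) < famN r m := by push_cast at hk; omega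
    calc opY r (opX (Qfam r m q0 (t+1))) i j
        = ((r:ℂ) - (i:ℂ) + 1) * (((t+1:ℕ):ℂ) * Qfam r m q0 t (i-1) j)
          + ((r:ℂ) - (j:ℂ) + 1) * (((t+1:ℕ):ℂ) * Qfam r m q0 t i (j-1)) := by
          simp only [opY]; rw [hX, hX]; simp only [Nat.add_sub_cancel]
      _ = ((t+1:ℕ):ℂ) * opY r (Qfam r m q0 t) i j := by simp only [opY]; ring
      _ = ((t+1:ℕ):ℂ) * ((((famN r m : ℤ):ℂ) - (t:ℂ)) * Qfam r m q0 (t+1) i j) := by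
          rw [Ydef r m q0 t ht]
      _ = ((t+1:ℕ):ℂ) * ((((famN r m : ℤ):ℂ) - ((t+1:ℕ):ℂ) + 1) * Qfam r m q0 (t+1) i j) := by
          push_cast; ring

lemma XQ (r m : ℕ) (q0 : ℤ → ℤ → ℂ)
    (hq0range : ∀ i j : ℤ, ¬(0 ≤ i ∧ i ≤ (r : ℤ) ∧ 0 ≤ j ∧ j ≤ (r : ℤ)) → q0 i j = 0)
    (hq0rec : ∀ i j : ℤ, 0 ≤ i → i ≤ (r : ℤ) → 0 ≤ j → j ≤ (r : ℤ) →
      ((i : ℂ) + 1) * q0 (i + 1) j + ((j : ℂ) + 1) * q0 i (j + 1) = 0)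
    (hq0wt : ∀ i j : ℤ, 0 ≤ i → i ≤ (r : ℤ) → 0 ≤ j → j ≤ (r : ℤ) →
      ((2 * (r : ℤ) - 2 * i - 2 * j - famN r m : ℤ) : ℂ) * q0 i j = 0) :
    ∀ k : ℕ, (k:ℤ) ≤ famN r m → ∀ i j : ℤ,
      opX (Qfam r m q0 k) i j = (k:ℂ) * Qfam r m q0 (k-1) i j := by
  intro k
  induction k with
  | zero =>
    intro _ i j
    simp only [Nat.cast_zero, zero_mul]
    exact XQ0 r q0 hq0range hq0rec i j
  | succ k ih =>
    intro hk i j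
    have hkn : (k:ℤ) < famN r m := by push_cast at hk; omega
    have hkle : (k:ℤ) ≤ famN r m := le_of_lt hkn
    have hX := ih hkle
    have hne := nkne r m k hkn
    show opX (Qfam r m q0 (k+1)) i j = ((k+1:ℕ):ℂ) * Qfam r m q0 k i j
    apply mul_left_cancel₀ hne
    calc (((famN r m : ℤ):ℂ) - (k:ℂ)) * opX (Qfam r m q0 (k+1)) i j
        = ((i:ℂ)+1) * ((((famN r m : ℤ):ℂ) - (k:ℂ)) * Qfam r m q0 (k+1) (i+1) j)
          + ((j:ℂ)+1) * ((((famN r m : ℤ):ℂ) - (k:ℂ)) * Qfam r m q0 (k+1) i (j+1)) := by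
          simp only [opX]; ring
      _ = ((i:ℂ)+1) * opY r (Qfam r m q0 k) (i+1) j
          + ((j:ℂ)+1) * opY r (Qfam r m q0 k) i (j+1) := by
          rw [Ydef r m q0 k hkn, Ydef r m q0 k hkn]
      _ = opX (opY r (Qfam r m q0 k)) i j := rfl
      _ = opY r (opX (Qfam r m q0 k)) i j
          + (2 * (r : ℂ) - 2 * (i : ℂ) - 2 * (j : ℂ)) * Qfam r m q0 k i j := comm_XY r _ i j
      _ = (k:ℂ) * ((((famN r m : ℤ):ℂ) - (k:ℂ) + 1) * Qfam r m q0 k i j)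
          + (((famN r m : ℤ):ℂ) - 2 * (k:ℂ)) * Qfam r m q0 k i j := by
          rw [YXQ r m q0 k hkle hX, wt r m q0 hq0range hq0wt]
      _ = (((famN r m : ℤ):ℂ) - (k:ℂ)) * (((k+1:ℕ):ℂ) * Qfam r m q0 k i j) := by
          push_cast; ring

lemma Ytop (r m : ℕ) (q0 : ℤ → ℤ → ℂ) (hm : 2 * m ≤ r)
    (hq0range : ∀ i j : ℤ, ¬(0 ≤ i ∧ i ≤ (r : ℤ) ∧ 0 ≤ j ∧ j ≤ (r : ℤ)) → q0 i j = 0)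
    (hq0rec : ∀ i j : ℤ, 0 ≤ i → i ≤ (r : ℤ) → 0 ≤ j → j ≤ (r : ℤ) →
      ((i : ℂ) + 1) * q0 (i + 1) j + ((j : ℂ) + 1) * q0 i (j + 1) = 0)
    (hq0wt : ∀ i j : ℤ, 0 ≤ i → i ≤ (r : ℤ) → 0 ≤ j → j ≤ (r : ℤ) →
      ((2 * (r : ℤ) - 2 * i - 2 * j - famN r m : ℤ) : ℂ) * q0 i j = 0) :
    ∀ i j : ℤ, opY r (Qfam r m q0 (famN r m).toNat) i j = 0 := by
  set N := (famN r m).toNat with hNdef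
  have hN : (N:ℤ) = famN r m := Int.toNat_of_nonneg (by unfold famN; omega)
  have hNZ : (N:ℤ) = 2 * (r:ℤ) - 4 * (m:ℤ) := by rw [hN]; rfl
  have hgs : ∀ i j : ℤ,
      ¬(0 ≤ i ∧ i ≤ (r:ℤ) ∧ 0 ≤ j ∧ j ≤ (r:ℤ) ∧ i + j = (N:ℤ) + 2 * m + 1) →
      opY r (Qfam r m q0 N) i j = 0 := by
    intro i j h
    exact Ysupp r _ ((N:ℤ) + 2 * m) (supp r m q0 hq0range hq0wt N) i j h
  have hNcast : ((famN r m : ℤ):ℂ) = (N:ℂ) := by exact_mod_cast congrArg (Int.cast : ℤ → ℂ) hN.symm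
  have hXg : ∀ i j : ℤ, opX (opY r (Qfam r m q0 N)) i j = 0 := by
    intro i j
    rw [comm_XY r _ i j,
      YXQ r m q0 N (le_of_eq hN) (XQ r m q0 hq0range hq0rec hq0wt N (le_of_eq hN)),
      wt r m q0 hq0range hq0wt, hNcast]
    ring
  have key : ∀ d : ℕ, ∀ i j : ℤ, (r:ℤ) + 1 - (d:ℤ) ≤ i → opY r (Qfam r m q0 N) i j = 0 := by
    intro d
    induction d with
    | zero =>
      intro i j hi
      apply hgs
      intro hc
      omega
    | succ d ihd =>
      intro i j hi
      by_cases hc : 0 ≤ i ∧ i ≤ (r:ℤ) ∧ 0 ≤ j ∧ j ≤ (r:ℤ) ∧ i + j = (N:ℤ) + 2 * m + 1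
      · have hj : 1 ≤ j := by omega
        have h0 := hXg i (j - 1)
        simp only [opX, sub_add_cancel] at h0
        rw [ihd (i+1) (j-1) (by push_cast at hi ⊢; omega), mul_zero, zero_add] at h0
        have hjc : ((j - 1 : ℤ):ℂ) + 1 = (j:ℂ) := by push_cast; ring
        rw [hjc] at h0
        have hjne : (j:ℂ) ≠ 0 := Int.cast_ne_zero.mpr (by omega)
        exact (mul_eq_zero.mp h0).resolve_left hjne
      · exact hgs i j hc
  intro i j
  exact key ((r:ℤ) + 1 - i).toNat i j (by omega)

def qC (r m : ℕ) (q0 : ℤ → ℤ → ℂ) : ℤ → ℤ → ℤ → ℂ :=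
  fun k i j => if 0 ≤ k ∧ k ≤ famN r m then Qfam r m q0 k.toNat i j else 0

lemma qC_family (r m : ℕ) (q0 : ℤ → ℤ → ℂ) (hm : 2 * m ≤ r)
    (hq0range : ∀ i j : ℤ, ¬(0 ≤ i ∧ i ≤ (r : ℤ) ∧ 0 ≤ j ∧ j ≤ (r : ℤ)) → q0 i j = 0)
    (hq0rec : ∀ i j : ℤ, 0 ≤ i → i ≤ (r : ℤ) → 0 ≤ j → j ≤ (r : ℤ) →
      ((i : ℂ) + 1) * q0 (i + 1) j + ((j : ℂ) + 1) * q0 i (j + 1) = 0)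
    (hq0wt : ∀ i j : ℤ, 0 ≤ i → i ≤ (r : ℤ) → 0 ≤ j → j ≤ (r : ℤ) →
      ((2 * (r : ℤ) - 2 * i - 2 * j - famN r m : ℤ) : ℂ) * q0 i j = 0) :
    IsCoeffFamily r m (qC r m q0) := by
  refine ⟨?_, ?_, ?_, ?_⟩
  · intro k i j h
    by_cases hk : 0 ≤ k ∧ k ≤ famN r m
    · show (if _ then _ else _) = (0:ℂ)
      rw [if_pos hk]
      apply supp r m q0 hq0range hq0wt
      intro hc
      exact h ⟨hk.1, hk.2, hc.1, hc.2.1, hc.2.2.1, hc.2.2.2.1⟩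
    · show (if _ then _ else _) = (0:ℂ)
      rw [if_neg hk]
  · -- R1
    intro k i j hk0 hkn hi0 hi1 hj0 hj1
    have hpos : 0 ≤ k ∧ k ≤ famN r m := ⟨hk0, hkn⟩
    set K := k.toNat with hKdef
    have hK : (K:ℤ) = k := Int.toNat_of_nonneg hk0
    have hKn : (K:ℤ) ≤ famN r m := by omega
    have hXk := XQ r m q0 hq0range hq0rec hq0wt K hKn i j
    have e : ∀ x y : ℤ, qC r m q0 k x y = Qfam r m q0 K x y := fun x y => if_pos hpos
    rw [e, e, show ((i:ℂ)+1) * Qfam r m q0 K (i+1) j + ((j:ℂ)+1) * Qfam r m q0 K i (j+1)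
      = opX (Qfam r m q0 K) i j from rfl, hXk]
    rcases Nat.eq_zero_or_pos K with h0 | hpos1
    · have hk0' : k = 0 := by omega
      subst hk0'
      rw [h0]
      norm_num
    · have e2 : qC r m q0 (k-1) i j = Qfam r m q0 (K-1) i j := by
        show (if _ then _ else _) = _
        rw [if_pos ⟨by omega, by omega⟩]
        have : (k-1).toNat = K - 1 := by omega
        rw [this]
      have e3 : (k:ℂ) = (K:ℂ) := by exact_mod_cast congrArg (Int.cast : ℤ → ℂ) hK.symm
      rw [e2, e3]
  · -- R2
    intro k i j hk0 hkn hi0 hi1 hj0 hj1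
    have hpos : 0 ≤ k ∧ k ≤ famN r m := ⟨hk0, hkn⟩
    set K := k.toNat with hKdef
    have hK : (K:ℤ) = k := Int.toNat_of_nonneg hk0
    have e : ∀ x y : ℤ, qC r m q0 k x y = Qfam r m q0 K x y := fun x y => if_pos hpos
    by_cases hklt : k < famN r m
    · have hKlt : (K:ℤ) < famN r m := by omega
      have e1 : qC r m q0 (k+1) i j = Qfam r m q0 (K+1) i j := by
        show (if _ then _ else _) = _
        rw [if_pos ⟨by omega, by omega⟩]
        have : (k+1).toNat = K + 1 := by omega
        rw [this]
      rw [e1, e, e]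
      have hY := Ydef r m q0 K hKlt i j
      have ec : ((famN r m - k : ℤ):ℂ) = ((famN r m : ℤ):ℂ) - (K:ℂ) := by
        rw [← hK]; push_cast; ring
      rw [ec, hY]
      simp only [opY]
      push_cast
      ring
    · have hkeq : k = famN r m := by omega
      have htop := Ytop r m q0 hm hq0range hq0rec hq0wt i j
      have hz : ((famN r m - k : ℤ):ℂ) = 0 := by rw [hkeq]; simp
      rw [hz, zero_mul]
      have e' : ∀ x y : ℤ, qC r m q0 k x y = Qfam r m q0 (famN r m).toNat x y := by
        intro x y
        rw [e]
        have : K = (famN r m).toNat := by omega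
        rw [this]
      rw [e', e']
      simp only [opY] at htop
      push_cast
      linear_combination -htop
  · -- R3
    intro k i j hk0 hkn hi0 hi1 hj0 hj1
    by_cases hz : qC r m q0 k i j = 0
    · rw [hz, mul_zero]
    · have hpos : 0 ≤ k ∧ k ≤ famN r m := ⟨hk0, hkn⟩
      have e : qC r m q0 k i j = Qfam r m q0 k.toNat i j := if_pos hpos
      have hzQ : Qfam r m q0 k.toNat i j ≠ 0 := by rw [← e]; exact hz
      have hc : 0 ≤ i ∧ i ≤ (r:ℤ) ∧ 0 ≤ j ∧ j ≤ (r:ℤ) ∧ i + j = (k.toNat:ℤ) + 2 * m := by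
        by_contra hc; exact hzQ (supp r m q0 hq0range hq0wt k.toNat i j hc)
      have hij : i + j = k + 2 * (m:ℤ) := by omega
      have hco : (famN r m - 2*k - 2*(r:ℤ) + 2*i + 2*j : ℤ) = 0 := by
        unfold famN; omega
      rw [hco]
      simp

lemma qC_unique (r m : ℕ) (q0 : ℤ → ℤ → ℂ)
    (hq0range : ∀ i j : ℤ, ¬(0 ≤ i ∧ i ≤ (r : ℤ) ∧ 0 ≤ j ∧ j ≤ (r : ℤ)) → q0 i j = 0)
    (hq0wt : ∀ i j : ℤ, 0 ≤ i → i ≤ (r : ℤ) → 0 ≤ j → j ≤ (r : ℤ) →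
      ((2 * (r : ℤ) - 2 * i - 2 * j - famN r m : ℤ) : ℂ) * q0 i j = 0)
    (q' : ℤ → ℤ → ℤ → ℂ) (hq' : IsCoeffFamily r m q')
    (h0 : ∀ i j : ℤ, q' 0 i j = q0 i j) : q' = qC r m q0 := by
  obtain ⟨hrange, _, hR2, _⟩ := hq'
  have hnat : ∀ t : ℕ, (t:ℤ) ≤ famN r m → ∀ i j : ℤ, q' (t:ℤ) i j = Qfam r m q0 t i j := by
    intro t
    induction t with
    | zero => intro _ i j; simpa [Qfam] using h0 i j
    | succ t ih =>
      intro ht i j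
      have htlt : (t:ℤ) < famN r m := by push_cast at ht; omega
      have ihf := ih (le_of_lt htlt)
      have hcast : ((t+1:ℕ):ℤ) = (t:ℤ) + 1 := by push_cast; ring
      rw [hcast]
      by_cases hin : 0 ≤ i ∧ i ≤ (r:ℤ) ∧ 0 ≤ j ∧ j ≤ (r:ℤ)
      · have h2 := hR2 (t:ℤ) i j (Int.natCast_nonneg t) (le_of_lt htlt)
          hin.1 hin.2.1 hin.2.2.1 hin.2.2.2
        rw [ihf, ihf] at h2
        have hY := Ydef r m q0 t htlt i j
        have hne := nkne r m t htlt
        have ecast : ((famN r m - (t:ℤ) : ℤ):ℂ) = ((famN r m : ℤ):ℂ) - (t:ℂ) := by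
          push_cast; ring
        rw [ecast] at h2
        have hRR : (((r:ℤ) - i + 1 : ℤ):ℂ) * Qfam r m q0 t (i-1) j
            + (((r:ℤ) - j + 1 : ℤ):ℂ) * Qfam r m q0 t i (j-1)
            = opY r (Qfam r m q0 t) i j := by
          simp only [opY]; push_cast; ring
        apply mul_left_cancel₀ hne
        rw [h2, hRR, hY]
      · have o1 : q' ((t:ℤ)+1) i j = 0 := hrange _ i j (fun hbig =>
          hin ⟨hbig.2.2.1, hbig.2.2.2.1, hbig.2.2.2.2.1, hbig.2.2.2.2.2⟩)
        have o2 : Qfam r m q0 (t+1) i j = 0 := supp r m q0 hq0range hq0wt (t+1) i j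
          (fun hbig => hin ⟨hbig.1, hbig.2.1, hbig.2.2.1, hbig.2.2.2.1⟩)
        rw [o1, o2]
  funext k i j
  by_cases hk : 0 ≤ k ∧ k ≤ famN r m
  · have hK : (k.toNat:ℤ) = k := Int.toNat_of_nonneg hk.1
    have hres := hnat k.toNat (by omega) i j
    rw [hK] at hres
    rw [hres]
    exact (if_pos hk).symm
  · rw [hrange k i j (fun hbig => hk ⟨hbig.1, hbig.2.1⟩)]
    exact (if_neg hk).symm

lemma swap_family (r m : ℕ) (q : ℤ → ℤ → ℤ → ℂ) (h : IsCoeffFamily r m q) :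
    IsCoeffFamily r m (fun k i j => q k j i) := by
  obtain ⟨h0, h1, h2, h3⟩ := h
  refine ⟨?_, ?_, ?_, ?_⟩
  · intro k i j hc
    exact h0 k j i (fun hb => hc ⟨hb.1, hb.2.1, hb.2.2.2.2.1, hb.2.2.2.2.2, hb.2.2.1, hb.2.2.2.1⟩)
  · intro k i j a b c d e f
    show (k:ℂ) * q (k-1) j i = ((i:ℂ)+1) * q k j (i+1) + ((j:ℂ)+1) * q k (j+1) i
    rw [h1 k j i a b e f c d]
    ring
  · intro k i j a b c d e f
    show ((famN r m - k : ℤ):ℂ) * q (k+1) j i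
      = (((r:ℤ) - i + 1 : ℤ):ℂ) * q k j (i-1) + (((r:ℤ) - j + 1 : ℤ):ℂ) * q k (j-1) i
    rw [h2 k j i a b e f c d]
    ring
  · intro k i j a b c d e f
    show ((famN r m - 2*k - 2*(r:ℤ) + 2*i + 2*j : ℤ):ℂ) * q k j i = 0
    have : (famN r m - 2*k - 2*(r:ℤ) + 2*i + 2*j : ℤ)
        = (famN r m - 2*k - 2*(r:ℤ) + 2*j + 2*i : ℤ) := by ring
    rw [this]
    exact h3 k j i a b e f c d

/-- existence and uniqueness of the coefficient family extending a given
level-0 component `q0`, together with the symmetry equivalence. -/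
theorem stmt0 (r m : ℕ) (hr : 2 ≤ r) (hm : 2 * m ≤ r)
    (q0 : ℤ → ℤ → ℂ)
    (hq0range : ∀ i j : ℤ, ¬(0 ≤ i ∧ i ≤ (r : ℤ) ∧ 0 ≤ j ∧ j ≤ (r : ℤ)) → q0 i j = 0)
    (hq0rec : ∀ i j : ℤ, 0 ≤ i → i ≤ (r : ℤ) → 0 ≤ j → j ≤ (r : ℤ) →
      ((i : ℂ) + 1) * q0 (i + 1) j + ((j : ℂ) + 1) * q0 i (j + 1) = 0)
    (hq0wt : ∀ i j : ℤ, 0 ≤ i → i ≤ (r : ℤ) → 0 ≤ j → j ≤ (r : ℤ) →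
      ((2 * (r : ℤ) - 2 * i - 2 * j - famN r m : ℤ) : ℂ) * q0 i j = 0) :
    (∃! q : ℤ → ℤ → ℤ → ℂ, IsCoeffFamily r m q ∧ ∀ i j : ℤ, q 0 i j = q0 i j) ∧
    (∀ q : ℤ → ℤ → ℤ → ℂ, IsCoeffFamily r m q → (∀ i j : ℤ, q 0 i j = q0 i j) →
      ((∀ k i j : ℤ, q k i j = q k j i) ↔ (∀ i j : ℤ, q0 i j = q0 j i))) := by
  have hn0 : (0:ℤ) ≤ famN r m := by unfold famN; omega
  constructor
  · refine ⟨qC r m q0, ⟨qC_family r m q0 hm hq0range hq0rec hq0wt, fun i j => ?_⟩, ?_⟩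
    · show (if _ then _ else _) = q0 i j
      rw [if_pos ⟨le_refl (0:ℤ), hn0⟩]
      rfl
    · rintro q' ⟨hq', h0⟩
      exact qC_unique r m q0 hq0range hq0wt q' hq' h0
  · intro q hq hq0v
    constructor
    · intro hsym i j
      rw [← hq0v i j, ← hq0v j i, hsym 0 i j]
    · intro hs0 k i j
      have e1 := qC_unique r m q0 hq0range hq0wt q hq hq0v
      have e2 := qC_unique r m q0 hq0range hq0wt (fun k i j => q k j i)
        (swap_family r m q hq) (fun i j => by
          show q 0 j i = q0 i j
          rw [hq0v j i]; exact hs0 j i)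
      exact (congrFun (congrFun (congrFun e1 k) i) j).trans
        (congrFun (congrFun (congrFun e2 k) i) j).symm
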